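/- Let n ≥ 0 and d ≥ 2 be integers, let h = x₀^d + ⋯ + x_{n+1}^d ∈ ℂ[x₀,…,x_{n+1}] be the Fermat polynomial of degree d, and let M = ℂ[x₀,…,x_{n+1}]/J(h) be its Milnor algebra. Then M has the maximal rank property: for every integer k ≥ 0 there exists a homogeneous polynomial f of degree k such that for every integer i ≥ 0 the ℂ-linear multiplication map ×f : M_i → M_{i+k} is injective or surjective. -/

import Mathlib

open MvPolynomial

/-- The degree-`i` graded piece of the quotient algebra `R/I`, where
`R = ℂ[x₀,…,x_{n+1}]` is graded by total degree: the image of the space of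
homogeneous polynomials of degree `i` under the quotient map. -/
noncomputable def gradedPiece {m : ℕ} (I : Ideal (MvPolynomial (Fin m) ℂ)) (i : ℕ) :
    Submodule ℂ (MvPolynomial (Fin m) ℂ ⧸ I) :=
  (homogeneousSubmodule (Fin m) ℂ i).map (Ideal.Quotient.mkₐ ℂ I).toLinearMap

section Core

variable {W : Type*} [AddCommGroup W] [Module ℂ W]

structure Sl2Data (W : Type*) [AddCommGroup W] [Module ℂ W] where
  V : ℤ → Submodule ℂ W
  D : ℕ
  E : Module.End ℂ W
  F : Module.End ℂ W
  φ : W → W → ℂ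
  hEV : ∀ i : ℤ, ∀ v ∈ V i, E v ∈ V (i+1)
  hFV : ∀ i : ℤ, ∀ v ∈ V i, F v ∈ V (i-1)
  hVneg : ∀ i : ℤ, i < 0 → V i = ⊥
  hVbig : ∀ i : ℤ, (D:ℤ) < i → V i = ⊥
  hcomm : ∀ i : ℤ, ∀ v ∈ V i, F (E v) = E (F v) + (((D:ℤ) - 2*i : ℤ) : ℂ) • v
  φadd : ∀ u v w, φ u (v + w) = φ u v + φ u w
  φsmul : ∀ (c : ℂ) u v, φ u (c • v) = c * φ u v
  φzero : ∀ v, φ 0 v = 0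
  hadjF : ∀ u v, φ (F u) v = φ u (E v)
  hadjE : ∀ u v, φ (E u) v = φ u (F v)
  him : ∀ v, (φ v v).im = 0
  hre : ∀ v, 0 ≤ (φ v v).re
  hdef : ∀ v, φ v v = 0 → v = 0

namespace Sl2Data

variable (S : Sl2Data W)

lemma φzero' (u : W) : S.φ u 0 = 0 := by
  have := S.φsmul 0 u 0
  simpa using this

lemma Epow_mem : ∀ (t : ℕ) (i : ℤ) (v : W), v ∈ S.V i → (S.E^t) v ∈ S.V (i + t) := by
  intro t
  induction t with
  | zero => intro i v hv; simpa using hv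
  | succ t ih =>
    intro i v hv
    have h1 : (S.E ^ (t+1)) v = S.E ((S.E ^ t) v) := by
      rw [pow_succ']; rfl
    rw [h1]
    have := S.hEV (i + t) _ (ih i v hv)
    have he : (i + (t:ℤ)) + 1 = i + ((t:ℕ)+1 : ℕ) := by push_cast; ring
    rwa [he] at this

lemma Fpow_mem : ∀ (t : ℕ) (i : ℤ) (v : W), v ∈ S.V i → (S.F^t) v ∈ S.V (i - t) := by
  intro t
  induction t with
  | zero => intro i v hv; simpa using hv
  | succ t ih =>
    intro i v hv
    have h1 : (S.F ^ (t+1)) v = S.F ((S.F ^ t) v) := by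
      rw [pow_succ']; rfl
    rw [h1]
    have := S.hFV (i - t) _ (ih i v hv)
    have he : (i - (t:ℤ)) - 1 = i - ((t:ℕ)+1 : ℕ) := by push_cast; ring
    rwa [he] at this

/-- Mirror data: swap `E` and `F`, reflect the grading. -/
noncomputable def mirror : Sl2Data W where
  V i := S.V (S.D - i)
  D := S.D
  E := S.F
  F := S.E
  φ := S.φ
  hEV i v hv := by
    have := S.hFV (S.D - i) v hv
    have he : ((S.D:ℤ) - i) - 1 = (S.D:ℤ) - (i+1) := by ring
    rwa [he] at this
  hFV i v hv := by
    have := S.hEV (S.D - i) v hv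
    have he : ((S.D:ℤ) - i) + 1 = (S.D:ℤ) - (i-1) := by ring
    rwa [he] at this
  hVneg i hi := S.hVbig _ (by omega)
  hVbig i hi := S.hVneg _ (by omega)
  hcomm i v hv := by
    have h := S.hcomm (S.D - i) v hv
    have he : (((S.D:ℤ) - 2*((S.D:ℤ) - i) : ℤ) : ℂ) = -(((S.D:ℤ) - 2*i : ℤ) : ℂ) := by
      push_cast; ring
    rw [he] at h
    have : S.E (S.F v) = S.F (S.E v) + (((S.D:ℤ) - 2*i : ℤ) : ℂ) • v := by
      rw [h, neg_smul]; abel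
    exact this
  φadd := S.φadd
  φsmul := S.φsmul
  φzero := S.φzero
  hadjF := S.hadjE
  hadjE := S.hadjF
  him := S.him
  hre := S.hre
  hdef := S.hdef

lemma pow_succ_apply (A : Module.End ℂ W) (t : ℕ) (v : W) :
    (A ^ (t+1)) v = A ((A ^ t) v) := by rw [pow_succ']; rfl

lemma pow_succ_apply' (A : Module.End ℂ W) (t : ℕ) (v : W) :
    (A ^ (t+1)) v = (A ^ t) (A v) := by rw [pow_succ]; rfl

/-- `F (E^(t+1) p) = (t+1)(D - 2i - t) • E^t p` for primitive `p`. -/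
lemma prim (i : ℤ) (p : W) (hp : p ∈ S.V i) (hFp : S.F p = 0) :
    ∀ t : ℕ, S.F ((S.E^(t+1)) p) = ((((t:ℤ)+1) * ((S.D:ℤ) - 2*i - t) : ℤ) : ℂ) • (S.E^t) p := by
  intro t
  induction t with
  | zero =>
    have h1 : (S.E ^ 1) p = S.E p := by simp
    rw [h1]
    have := S.hcomm i p hp
    rw [hFp, map_zero, zero_add] at this
    rw [this]
    norm_num
  | succ t ih =>
    rw [pow_succ_apply S.E (t+1) p]
    have hmem : (S.E ^ (t+1)) p ∈ S.V (i + (t+1 : ℕ)) := S.Epow_mem (t+1) i p hp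
    have hc := S.hcomm _ _ hmem
    rw [hc, ih, map_smul]
    rw [← pow_succ_apply S.E t p, ← add_smul]
    congr 1
    push_cast
    ring

/-- exchange: `F (E^(m+1) v) = E^(m+1) (F v) + c • E^m v` for some scalar `c`. -/
lemma exchange : ∀ (t : ℕ) (i : ℤ) (v : W), v ∈ S.V i →
    ∃ c : ℂ, S.F ((S.E^(t+1)) v) = (S.E^(t+1)) (S.F v) + c • (S.E^t) v := by
  intro t
  induction t with
  | zero =>
    intro i v hv
    refine ⟨(((S.D:ℤ) - 2*i : ℤ) : ℂ), ?_⟩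
    have h1 : (S.E ^ 1 : Module.End ℂ W) = S.E := by simp
    simpa [h1] using S.hcomm i v hv
  | succ t ih =>
    intro i v hv
    obtain ⟨c, hc⟩ := ih i v hv
    have hmem : (S.E ^ (t+1)) v ∈ S.V (i + (t+1 : ℕ)) := S.Epow_mem (t+1) i v hv
    refine ⟨c + (((S.D:ℤ) - 2*(i + (t+1 : ℕ)) : ℤ) : ℂ), ?_⟩
    rw [pow_succ_apply S.E (t+1) v, S.hcomm _ _ hmem, hc]
    rw [map_add, map_smul, ← pow_succ_apply, ← pow_succ_apply]
    rw [add_smul]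
    abel

/-- For `j < t`, `F^j (E^t v)` lies in the range of `E`. -/
lemma range_lemma : ∀ (j : ℕ) (t : ℕ), j < t → ∀ (i : ℤ) (v : W), v ∈ S.V i →
    (S.F^j) ((S.E^t) v) ∈ LinearMap.range S.E := by
  intro j
  induction j with
  | zero =>
    intro t ht i v _
    obtain ⟨t', rfl⟩ : ∃ t', t = t' + 1 := ⟨t - 1, by omega⟩
    rw [pow_zero]
    exact ⟨(S.E^t') v, (pow_succ_apply S.E t' v).symm⟩
  | succ j ih =>
    intro t ht i v hv
    obtain ⟨t', rfl⟩ : ∃ t', t = t' + 1 := ⟨t - 1, by omega⟩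
    obtain ⟨c, hc⟩ := S.exchange t' i v hv
    have h1 : (S.F ^ (j+1)) ((S.E ^ (t'+1)) v) = (S.F ^ j) (S.F ((S.E ^ (t'+1)) v)) := by
      rw [pow_succ]; rfl
    rw [h1, hc, map_add, map_smul]
    refine Submodule.add_mem _ ?_ (Submodule.smul_mem _ _ ?_)
    · exact ih (t'+1) (by omega) (i-1) (S.F v) (S.hFV i v hv)
    · exact ih t' (by omega) i v hv

lemma prim_pow (i : ℤ) (k : ℕ) (hk : 2*i + k ≤ (S.D : ℤ)) (p : W) (hp : p ∈ S.V i)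
    (hFp : S.F p = 0) :
    ∀ j : ℕ, j ≤ k → ∃ C : ℤ, 0 < C ∧ (S.F^j) ((S.E^k) p) = (C : ℂ) • (S.E^(k-j)) p := by
  intro j
  induction j with
  | zero => intro _; exact ⟨1, one_pos, by simp⟩
  | succ j ih =>
    intro hjk
    obtain ⟨C, hC, hCe⟩ := ih (by omega)
    obtain ⟨t, ht⟩ : ∃ t, k - j = t + 1 := ⟨k - j - 1, by omega⟩
    refine ⟨C * (((t:ℤ)+1) * ((S.D:ℤ) - 2*i - t)).toNat, ?_, ?_⟩
    · have h1 : (0:ℤ) < ((t:ℤ)+1) * ((S.D:ℤ) - 2*i - t) := by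
        apply mul_pos (by positivity)
        omega
      have h1' : (0:ℤ) < (((t:ℤ)+1) * ((S.D:ℤ) - 2*i - t)).toNat := by omega
      positivity
    · have h2 : (S.F ^ (j+1)) ((S.E^k) p) = S.F ((S.F ^ j) ((S.E^k) p)) := by
        rw [pow_succ']; rfl
      rw [h2, hCe, map_smul, ht, S.prim i p hp hFp t]
      have h3 : k - (j+1) = t := by omega
      rw [h3, smul_smul]
      congr 1
      have h4 : (0:ℤ) ≤ ((t:ℤ)+1) * ((S.D:ℤ) - 2*i - t) := by
        apply mul_nonneg (by positivity)
        omega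
      push_cast [Int.toNat_of_nonneg h4]
      ring

lemma phi_self_eq_zero_of_re (v : W) (h : (S.φ v v).re = 0) : v = 0 := by
  apply S.hdef
  exact Complex.ext h (S.him v)

lemma adj_pow (t : ℕ) : ∀ u v : W, S.φ ((S.F^t) u) v = S.φ u ((S.E^t) v) := by
  induction t with
  | zero => intro u v; simp
  | succ t ih =>
    intro u v
    rw [pow_succ_apply' S.F t u, ih (S.F u) v, S.hadjF, ← pow_succ_apply]

theorem inj [FiniteDimensional ℂ W] :
    ∀ (N : ℕ) (i : ℤ) (k : ℕ), i ≤ N → 2*i + k ≤ (S.D:ℤ) → ∀ v ∈ S.V i, (S.E^k) v = 0 → v = 0 := by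
  intro N
  induction N with
  | zero =>
    intro i k hiN hk v hv hE
    rcases lt_or_eq_of_le hiN with hi | hi
    · rw [S.hVneg i hi] at hv; simpa using hv
    · subst hi
      rcases Nat.eq_zero_or_pos k with hk0 | hk0
      · subst hk0; simpa using hE
      · -- v is primitive since V (-1) = ⊥
        have hFv : S.F v = 0 := by
          have := S.hFV 0 v hv
          rw [S.hVneg _ (by norm_num)] at this
          simpa using this
        obtain ⟨C, hC, hCe⟩ := S.prim_pow 0 k (by simpa using hk) v hv hFv k le_rfl
        rw [hE, map_zero] at hCe
        have : (C:ℂ) ≠ 0 := by exact_mod_cast hC.ne'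
        have hv0 := (smul_eq_zero.mp hCe.symm).resolve_left this
        simpa using hv0
  | succ N ihN =>
    intro i k hiN hk v hv hE
    rcases lt_or_eq_of_le hiN with hi | hi
    · exact ihN i k (by omega) hk v hv hE
    · subst hi
      rcases Nat.eq_zero_or_pos k with hk0 | hk0
      · subst hk0; simpa using hE
      -- main argument; i = N+1 ≥ 1
      -- Step 1: the operator F∘E on V (i-1) is injective hence surjective
      set i : ℤ := (N:ℤ) + 1 with hidef
      have hmapsto : ∀ u ∈ S.V (i-1), S.F (S.E u) ∈ S.V (i-1) := by
        intro u hu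
        have h1 := S.hEV (i-1) u hu
        have h2 := S.hFV _ _ h1
        simpa using h2
      set A : S.V (i-1) →ₗ[ℂ] S.V (i-1) :=
        (S.F ∘ₗ S.E).restrict (p := S.V (i-1)) (q := S.V (i-1)) (fun u hu => hmapsto u hu) with hA
      have hc0 : (0:ℤ) < (S.D:ℤ) - 2*(i-1) := by omega
      have hAinj : Function.Injective A := by
        rw [← LinearMap.ker_eq_bot]
        rw [Submodule.eq_bot_iff]
        rintro ⟨u, hu⟩ hker
        rw [LinearMap.mem_ker, Subtype.ext_iff] at hker
        have hker' : S.F (S.E u) = 0 := hker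
        have hcm := S.hcomm (i-1) u hu
        rw [hker'] at hcm
        -- 0 = E (F u) + c • u
        have hphi : 0 = S.φ (S.F u) (S.F u) + (((S.D:ℤ) - 2*(i-1) : ℤ) : ℂ) * S.φ u u := by
          have := congrArg (S.φ u) hcm
          rw [S.φzero' u, S.φadd, S.φsmul] at this
          rw [this]
          congr 1
          rw [S.hadjF]
        have hre' : 0 = (S.φ (S.F u) (S.F u)).re + ((S.D:ℤ) - 2*(i-1)) * (S.φ u u).re := by
          have := congrArg Complex.re hphi
          rw [Complex.add_re, Complex.mul_re, Complex.intCast_re, Complex.intCast_im,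
            S.him u] at this
          simpa using this
        have h1 := S.hre (S.F u)
        have h2 := S.hre u
        have hc0' : (0:ℝ) < ((S.D:ℤ):ℝ) - 2*((i:ℝ) - 1) := by exact_mod_cast hc0
        have hz : (S.φ u u).re = 0 := by
          push_cast at hre' hc0' ⊢
          nlinarith [hc0', h1, h2]
        have := S.phi_self_eq_zero_of_re u hz
        exact Subtype.ext this
      have hAsurj : Function.Surjective A := (LinearMap.injective_iff_surjective).mp hAinj
      -- Step 2: decompose v = p + E w
      have hFv : S.F v ∈ S.V (i-1) := S.hFV i v hv
      obtain ⟨⟨w, hw⟩, hww⟩ := hAsurj ⟨S.F v, hFv⟩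
      rw [Subtype.ext_iff] at hww
      have hww' : S.F (S.E w) = S.F v := hww
      set p := v - S.E w with hp
      have hpmem : p ∈ S.V i := by
        apply Submodule.sub_mem _ hv
        have := S.hEV (i-1) w hw
        simpa using this
      have hFp : S.F p = 0 := by
        rw [hp, map_sub, hww', sub_self]
      -- Step 3: apply F^k to E^k v = E^k p + E^(k+1) w
      have hEv : (S.E^k) v = (S.E^k) p + (S.E^(k+1)) w := by
        rw [hp, map_sub, pow_succ_apply' S.E k w]
        abel
      obtain ⟨C, hC, hCe⟩ := S.prim_pow i k hk p hpmem hFp k le_rfl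
      have hrange : (S.F^k) ((S.E^(k+1)) w) ∈ LinearMap.range S.E :=
        S.range_lemma k (k+1) (by omega) (i-1) w hw
      have hkey : (C:ℂ) • p = - (S.F^k) ((S.E^(k+1)) w) := by
        have := congrArg (S.F^k) hEv
        rw [hE, map_zero, map_add, hCe] at this
        have h5 : k - k = 0 := by omega
        rw [h5, pow_zero] at this
        simp only [Module.End.one_apply] at this
        linear_combination (norm := module) -this
      have hprange : (C:ℂ) • p ∈ LinearMap.range S.E := by
        rw [hkey]
        exact Submodule.neg_mem _ hrange
      obtain ⟨x, hx⟩ := hprange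
      have hphip : S.φ p ((C:ℂ) • p) = 0 := by
        rw [← hx, ← S.hadjF, hFp, S.φzero]
      rw [S.φsmul] at hphip
      have hCne : (C:ℂ) ≠ 0 := by exact_mod_cast hC.ne'
      have hp0 : p = 0 := S.hdef p ((mul_eq_zero.mp hphip).resolve_left hCne)
      -- Step 4: conclude w = 0 by induction
      have hEw : (S.E^(k+1)) w = 0 := by
        rw [hEv, hp0, map_zero, zero_add] at hE
        exact hE
      have hw0 : w = 0 := ihN (i-1) (k+1) (by omega) (by push_cast; omega) w hw hEw
      rw [hp0] at hp
      have : v = S.E w := by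
        have := hp.symm
        rwa [sub_eq_zero] at this
      rw [this, hw0, map_zero]

theorem inj' [FiniteDimensional ℂ W] (i : ℤ) (k : ℕ) (hk : 2*i + k ≤ (S.D:ℤ))
    (v : W) (hv : v ∈ S.V i) (hE : (S.E^k) v = 0) : v = 0 := by
  rcases le_or_gt 0 i with hi | hi
  · exact S.inj i.toNat i k (by omega) hk v hv hE
  · rw [S.hVneg i hi] at hv; simpa using hv

theorem surj [FiniteDimensional ℂ W] (i : ℤ) (k : ℕ) (hk : (S.D:ℤ) ≤ 2*i + k) :
    ∀ v ∈ S.V (i + k), ∃ u ∈ S.V i, (S.E^k) u = v := by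
  have hFinj : ∀ v ∈ S.V (i+k), (S.F^k) v = 0 → v = 0 := by
    intro v hv hF
    have hm := S.mirror.inj' ((S.D:ℤ) - (i+k)) k
      (by rw [show S.mirror.D = S.D from rfl]; omega) v ?_ hF
    · exact hm
    · show v ∈ S.V ((S.D:ℤ) - ((S.D:ℤ) - (i+k)))
      have he : (S.D:ℤ) - ((S.D:ℤ) - (i+(k:ℤ))) = i + k := by ring
      rw [he]; exact hv
  -- the endomorphism E^k ∘ F^k of V (i+k) is injective hence surjective
  have hmapsto : ∀ u ∈ S.V (i+k), (S.E^k) ((S.F^k) u) ∈ S.V (i+k) := by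
    intro u hu
    have h1 := S.Fpow_mem k (i+k) u hu
    have h2 := S.Epow_mem k _ _ h1
    have he : (i + (k:ℤ) - k) + k = i + k := by ring
    rwa [he] at h2
  set Φ : S.V (i+k) →ₗ[ℂ] S.V (i+k) :=
    ((S.E^k) ∘ₗ (S.F^k)).restrict (p := S.V (i+k)) (q := S.V (i+k)) (fun u hu => hmapsto u hu)
    with hΦ
  have hΦinj : Function.Injective Φ := by
    rw [← LinearMap.ker_eq_bot, Submodule.eq_bot_iff]
    rintro ⟨u, hu⟩ hker
    rw [LinearMap.mem_ker, Subtype.ext_iff] at hker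
    have hker' : (S.E^k) ((S.F^k) u) = 0 := hker
    have : S.φ ((S.F^k) u) ((S.F^k) u) = 0 := by
      rw [S.adj_pow, hker', S.φzero']
    have hFu : (S.F^k) u = 0 := S.hdef _ this
    exact Subtype.ext (hFinj u hu hFu)
  have hΦsurj : Function.Surjective Φ := (LinearMap.injective_iff_surjective).mp hΦinj
  intro v hv
  obtain ⟨⟨w, hw⟩, hww⟩ := hΦsurj ⟨v, hv⟩
  rw [Subtype.ext_iff] at hww
  refine ⟨(S.F^k) w, ?_, hww⟩
  have h1 := S.Fpow_mem k (i+k) w hw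
  have he : i + (k:ℤ) - k = i := by ring
  rwa [he] at h1

end Sl2Data

end Core

namespace FermatMRP

variable (n m : ℕ)

abbrev Box := Fin (n+2) → Fin (m+1)

def degB (b : Box n m) : ℕ := ∑ j, (b j : ℕ)

variable {n m}

lemma degB_le (b : Box n m) : degB n m b ≤ (n+2) * m := by
  calc degB n m b ≤ ∑ _j : Fin (n+2), m := Finset.sum_le_sum (fun j _ => Fin.is_le (b j))
  _ = (n+2)*m := by simp [Finset.sum_const, mul_comm]

variable (n m)

/-- The permutation of the box rotating coordinate `j` (cyclically `+1 mod (m+1)`). -/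
def rot (j : Fin (n+2)) : Equiv.Perm (Box n m) where
  toFun c := Function.update c j (finRotate (m+1) (c j))
  invFun c := Function.update c j ((finRotate (m+1)).symm (c j))
  left_inv c := by
    show Function.update (Function.update c j (finRotate (m+1) (c j))) j
      ((finRotate (m+1)).symm ((Function.update c j (finRotate (m+1) (c j))) j)) = c
    rw [Function.update_self, Function.update_idem, Equiv.symm_apply_apply,
      Function.update_eq_self]
  right_inv c := by
    show Function.update (Function.update c j ((finRotate (m+1)).symm (c j))) j
      (finRotate (m+1) ((Function.update c j ((finRotate (m+1)).symm (c j))) j)) = c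
    rw [Function.update_self, Function.update_idem, Equiv.apply_symm_apply,
      Function.update_eq_self]

variable {n m}

lemma rot_apply_self (j : Fin (n+2)) (c : Box n m) :
    rot n m j c j = finRotate (m+1) (c j) := Function.update_self _ _ _

lemma rot_apply_ne (j l : Fin (n+2)) (c : Box n m) (h : l ≠ j) :
    rot n m j c l = c l := Function.update_of_ne h _ _

lemma rot_symm_apply_self (j : Fin (n+2)) (c : Box n m) :
    (rot n m j).symm c j = (finRotate (m+1)).symm (c j) := Function.update_self _ _ _

lemma rot_symm_apply_ne (j l : Fin (n+2)) (c : Box n m) (h : l ≠ j) :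
    (rot n m j).symm c l = c l := Function.update_of_ne h _ _

lemma val_finRotate (x : Fin (m+1)) (h : (x:ℕ) ≠ m) :
    ((finRotate (m+1) x : Fin (m+1)) : ℕ) = (x:ℕ) + 1 := by
  rw [finRotate_succ_apply, Fin.val_add_one]
  have : x ≠ Fin.last m := by
    intro hx; exact h (by rw [hx]; rfl)
  simp [this]

lemma val_finRotate_top (x : Fin (m+1)) (h : (x:ℕ) = m) :
    ((finRotate (m+1) x : Fin (m+1)) : ℕ) = 0 := by
  have : x = Fin.last m := by ext; simpa using h
  rw [this, finRotate_last]
  rfl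

lemma val_finRotate_symm (x : Fin (m+1)) (h : (x:ℕ) ≠ 0) :
    (((finRotate (m+1)).symm x : Fin (m+1)) : ℕ) = (x:ℕ) - 1 := by
  set y := (finRotate (m+1)).symm x with hy
  have hxy : finRotate (m+1) y = x := Equiv.apply_symm_apply _ _
  rcases eq_or_ne ((y:ℕ)) m with hm | hm
  · exfalso; apply h; rw [← hxy]; exact val_finRotate_top y hm
  · have := val_finRotate y hm
    rw [hxy] at this
    omega

lemma val_finRotate_symm_zero (x : Fin (m+1)) (h : (x:ℕ) = 0) :
    (((finRotate (m+1)).symm x : Fin (m+1)) : ℕ) = m := by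
  set y := (finRotate (m+1)).symm x with hy
  have hxy : finRotate (m+1) y = x := Equiv.apply_symm_apply _ _
  rcases eq_or_ne ((y:ℕ)) m with hm | hm
  · exact hm
  · exfalso
    have := val_finRotate y hm
    rw [hxy] at this
    -- x = y + 1 contradicts x = 0
    omega

lemma degB_update (c : Box n m) (j : Fin (n+2)) (x : Fin (m+1)) :
    degB n m (Function.update c j x) + (c j : ℕ) = degB n m c + (x:ℕ) := by
  unfold degB
  have hc : (fun l => ((Function.update c j x l : ℕ))) =
      Function.update (fun l => ((c l : ℕ))) j (x:ℕ) := by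
    funext l
    rcases eq_or_ne l j with rfl | hl
    · rw [Function.update_self, Function.update_self]
    · rw [Function.update_of_ne hl, Function.update_of_ne hl]
  rw [show ∑ l, ((Function.update c j x l : ℕ)) =
      ∑ l, Function.update (fun l => ((c l : ℕ))) j (x:ℕ) l from by rw [← hc]]
  rw [Finset.sum_update_of_mem (Finset.mem_univ j)]
  rw [← Finset.add_sum_erase Finset.univ (fun l => ((c l : ℕ))) (Finset.mem_univ j)]
  rw [show Finset.univ \ {j} = Finset.univ.erase j from by
    ext l; simp [Finset.mem_erase, Finset.mem_sdiff, and_comm]]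
  ring

lemma degB_rot (c : Box n m) (j : Fin (n+2)) (h : (c j : ℕ) ≠ m) :
    degB n m (rot n m j c) = degB n m c + 1 := by
  have h1 := degB_update c j (finRotate (m+1) (c j))
  rw [val_finRotate _ h] at h1
  show degB n m (Function.update c j (finRotate (m+1) (c j))) = _
  omega

lemma degB_rot_symm (c : Box n m) (j : Fin (n+2)) (h : (c j : ℕ) ≠ 0) :
    degB n m ((rot n m j).symm c) + 1 = degB n m c := by
  have h1 := degB_update c j ((finRotate (m+1)).symm (c j))
  rw [val_finRotate_symm _ h] at h1
  show degB n m (Function.update c j ((finRotate (m+1)).symm (c j))) + 1 = _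
  have hj : 1 ≤ (c j : ℕ) := Nat.one_le_iff_ne_zero.mpr h
  have hd : (c j : ℕ) ≤ degB n m c := by
    unfold degB
    exact Finset.single_le_sum (f := fun l => ((c l : ℕ))) (fun _ _ => Nat.zero_le _)
      (Finset.mem_univ j)
  omega

section Weights

def e1 (t : ℕ) : ℕ := if t = 0 then 0 else 1

def f1 (m t : ℕ) : ℕ := (t+1) * (m - t)

def wt (m : ℕ) : ℕ → ℕ
  | 0 => 1
  | (t+1) => wt m t * f1 m t

lemma wt_pos {m t : ℕ} (h : t ≤ m) : 0 < wt m t := by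
  induction t with
  | zero => simp [wt]
  | succ t ih =>
    rw [wt]
    apply Nat.mul_pos (ih (by omega))
    unfold f1
    have : 0 < m - t := by omega
    positivity

lemma e1_f1_pred {m t : ℕ} (h : t ≤ m) : e1 t * f1 m (t-1) = t * (m + 1 - t) := by
  rcases Nat.eq_zero_or_pos t with rfl | ht
  · simp [e1]
  · unfold e1 f1
    rw [if_neg (by omega)]
    have h1 : t - 1 + 1 = t := by omega
    have h2 : m - (t-1) = m + 1 - t := by omega
    rw [h1, h2, one_mul]

end Weights

variable (n m)

def ww (b : Box n m) : ℕ := ∏ j, wt m (b j)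

lemma ww_pos (b : Box n m) : 0 < ww n m b :=
  Finset.prod_pos (fun j _ => wt_pos (Fin.is_le (b j)))

/-- The raising operator (multiplication by `x₀+⋯+x_{n+1}` in coordinates). -/
noncomputable def EE : Module.End ℂ (Box n m → ℂ) where
  toFun u := fun c => ∑ j, (e1 ((c j : ℕ)) : ℂ) * u ((rot n m j).symm c)
  map_add' u v := by
    funext c
    simp [mul_add, Finset.sum_add_distrib]
  map_smul' a u := by
    funext c
    simp only [Pi.smul_apply, smul_eq_mul, RingHom.id_apply, Finset.mul_sum]
    exact Finset.sum_congr rfl fun j _ => by ring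

/-- The (weighted) lowering operator. -/
noncomputable def FF : Module.End ℂ (Box n m → ℂ) where
  toFun u := fun c => ∑ j, (f1 m ((c j : ℕ)) : ℂ) * u (rot n m j c)
  map_add' u v := by
    funext c
    simp [mul_add, Finset.sum_add_distrib]
  map_smul' a u := by
    funext c
    simp only [Pi.smul_apply, smul_eq_mul, RingHom.id_apply, Finset.mul_sum]
    exact Finset.sum_congr rfl fun j _ => by ring

lemma EE_apply (u : Box n m → ℂ) (c : Box n m) :
    EE n m u c = ∑ j, (e1 ((c j : ℕ)) : ℂ) * u ((rot n m j).symm c) := rfl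

lemma FF_apply (u : Box n m → ℂ) (c : Box n m) :
    FF n m u c = ∑ j, (f1 m ((c j : ℕ)) : ℂ) * u (rot n m j c) := rfl

/-- The Hermitian form. -/
noncomputable def phi (u v : Box n m → ℂ) : ℂ :=
  ∑ b, (ww n m b : ℂ) * (starRingEnd ℂ) (u b) * v b

/-- Graded pieces. -/
noncomputable def VV (i : ℤ) : Submodule ℂ (Box n m → ℂ) where
  carrier := {u | ∀ b, (degB n m b : ℤ) ≠ i → u b = 0}
  add_mem' := by
    intro u v hu hv b hb
    rw [Pi.add_apply, hu b hb, hv b hb, add_zero]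
  zero_mem' := by intro b _; rfl
  smul_mem' := by
    intro a u hu b hb
    rw [Pi.smul_apply, hu b hb, smul_zero]

lemma mem_VV {i : ℤ} {u : Box n m → ℂ} :
    u ∈ VV n m i ↔ ∀ b, (degB n m b : ℤ) ≠ i → u b = 0 := Iff.rfl

variable {n m}

lemma ww_update (b : Box n m) (j : Fin (n+2)) (x : Fin (m+1)) :
    ww n m (Function.update b j x) * wt m ((b j : ℕ)) = ww n m b * wt m ((x:ℕ)) := by
  unfold ww
  have hc : (fun l => wt m ((Function.update b j x l : ℕ))) =
      Function.update (fun l => wt m ((b l : ℕ))) j (wt m ((x:ℕ))) := by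
    funext l
    rcases eq_or_ne l j with rfl | hl
    · rw [Function.update_self, Function.update_self]
    · rw [Function.update_of_ne hl, Function.update_of_ne hl]
  rw [show ∏ l, wt m ((Function.update b j x l : ℕ)) =
      ∏ l, Function.update (fun l => wt m ((b l : ℕ))) j (wt m ((x:ℕ))) l from by rw [← hc]]
  rw [Finset.prod_update_of_mem (Finset.mem_univ j)]
  rw [← Finset.mul_prod_erase Finset.univ (fun l => wt m ((b l : ℕ))) (Finset.mem_univ j)]
  rw [show Finset.univ \ {j} = Finset.univ.erase j from by
    ext l; simp [Finset.mem_erase, Finset.mem_sdiff, and_comm]]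
  ring

lemma key2 (b : Box n m) (j : Fin (n+2)) :
    ww n m (rot n m j b) * e1 (((rot n m j b) j : ℕ)) = ww n m b * f1 m ((b j : ℕ)) := by
  rcases eq_or_ne ((b j : ℕ)) m with hm | hm
  · rw [rot_apply_self, val_finRotate_top _ hm]
    have : f1 m ((b j : ℕ)) = 0 := by unfold f1; rw [hm]; simp
    rw [this]; simp [e1]
  · rw [rot_apply_self, val_finRotate _ hm]
    have he : e1 ((b j : ℕ) + 1) = 1 := by unfold e1; rw [if_neg (by omega)]
    rw [he, mul_one]
    -- from ww_update with x := finRotate (b j)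
    have h1 : ww n m (rot n m j b) * wt m ((b j : ℕ)) =
        ww n m b * wt m ((b j : ℕ) + 1) := by
      have := ww_update b j (finRotate (m+1) (b j))
      rwa [val_finRotate _ hm] at this
    have h2 : wt m ((b j : ℕ) + 1) = wt m ((b j : ℕ)) * f1 m ((b j : ℕ)) := rfl
    have hpos : 0 < wt m ((b j : ℕ)) := wt_pos (Fin.is_le (b j))
    apply Nat.eq_of_mul_eq_mul_right hpos
    rw [h1, h2]
    ring

lemma key1 (b : Box n m) (j : Fin (n+2)) :
    ww n m ((rot n m j).symm b) * f1 m ((((rot n m j).symm b) j : ℕ)) =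
      ww n m b * e1 ((b j : ℕ)) := by
  rcases eq_or_ne ((b j : ℕ)) 0 with hm | hm
  · rw [rot_symm_apply_self, val_finRotate_symm_zero _ hm]
    have : f1 m m = 0 := by unfold f1; simp
    rw [this, hm]; simp [e1]
  · rw [rot_symm_apply_self, val_finRotate_symm _ hm]
    have he : e1 ((b j : ℕ)) = 1 := by unfold e1; rw [if_neg hm]
    rw [he, mul_one]
    have h1 : ww n m ((rot n m j).symm b) * wt m ((b j : ℕ)) =
        ww n m b * wt m ((b j : ℕ) - 1) := by
      have := ww_update b j ((finRotate (m+1)).symm (b j))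
      rwa [val_finRotate_symm _ hm] at this
    have h2 : wt m ((b j : ℕ)) = wt m ((b j : ℕ) - 1) * f1 m ((b j : ℕ) - 1) := by
      have : (b j : ℕ) = ((b j : ℕ) - 1) + 1 := by omega
      rw [this]; rfl
    have hpos : 0 < wt m ((b j : ℕ) - 1) := wt_pos (by have := Fin.is_le (b j); omega)
    apply Nat.eq_of_mul_eq_mul_right hpos
    calc ww n m ((rot n m j).symm b) * f1 m ((b j:ℕ) - 1) * wt m ((b j:ℕ) - 1)
        = ww n m ((rot n m j).symm b) * (wt m ((b j:ℕ) - 1) * f1 m ((b j:ℕ) - 1)) := by ring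
      _ = ww n m ((rot n m j).symm b) * wt m ((b j : ℕ)) := by rw [← h2]
      _ = ww n m b * wt m ((b j : ℕ) - 1) := h1

lemma sum_diag_diff {ι : Type*} [Fintype ι] [DecidableEq ι] (A B : ι → ι → ℂ)
    (hoff : ∀ j l, j ≠ l → A j l = B j l) :
    ((∑ j, ∑ l, A j l) - (∑ j, ∑ l, B j l)) = ∑ j, (A j j - B j j) := by
  rw [← Finset.sum_sub_distrib]
  refine Finset.sum_congr rfl fun j _ => ?_
  rw [← Finset.add_sum_erase _ (A j) (Finset.mem_univ j),
    ← Finset.add_sum_erase _ (B j) (Finset.mem_univ j)]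
  have he : ∑ l ∈ Finset.univ.erase j, A j l = ∑ l ∈ Finset.univ.erase j, B j l :=
    Finset.sum_congr rfl fun l hl => hoff j l (Ne.symm (Finset.mem_erase.mp hl).1)
  rw [he]
  ring

lemma rot_symm_rot_comm (c : Box n m) (j l : Fin (n+2)) (h : j ≠ l) :
    (rot n m l).symm (rot n m j c) = rot n m j ((rot n m l).symm c) := by
  show Function.update (Function.update c j (finRotate (m+1) (c j))) l
      ((finRotate (m+1)).symm ((Function.update c j (finRotate (m+1) (c j))) l)) =
    Function.update (Function.update c l ((finRotate (m+1)).symm (c l))) j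
      (finRotate (m+1) ((Function.update c l ((finRotate (m+1)).symm (c l))) j))
  rw [Function.update_of_ne (Ne.symm h), Function.update_of_ne h,
    Function.update_comm (Ne.symm h)]

lemma comm_apply (u : Box n m → ℂ) (c : Box n m) :
    FF n m (EE n m u) c - EE n m (FF n m u) c
      = ((((n:ℤ)+2)*m - 2*(degB n m c : ℤ) : ℤ) : ℂ) * u c := by
  have hFE : FF n m (EE n m u) c = ∑ j, ∑ l,
      (f1 m ((c j : ℕ)) : ℂ) * ((e1 (((rot n m j c) l : ℕ)) : ℂ) *
        u ((rot n m l).symm (rot n m j c))) := by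
    rw [FF_apply]
    refine Finset.sum_congr rfl fun j _ => ?_
    rw [EE_apply, Finset.mul_sum]
  have hEF : EE n m (FF n m u) c = ∑ j, ∑ l,
      (e1 ((c l : ℕ)) : ℂ) * ((f1 m (((((rot n m l).symm c) j) : ℕ)) : ℂ) *
        u (rot n m j ((rot n m l).symm c))) := by
    rw [EE_apply]
    rw [Finset.sum_comm]
    refine Finset.sum_congr rfl fun l _ => ?_
    rw [FF_apply, Finset.mul_sum]
  rw [hFE, hEF]
  rw [sum_diag_diff _ _ (by
    intro j l h
    rw [rot_apply_ne _ _ _ (Ne.symm h), rot_symm_apply_ne _ _ _ h,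
      rot_symm_rot_comm _ _ _ h]
    ring)]
  have hdiag : ∀ j, (f1 m ((c j : ℕ)) : ℂ) * ((e1 (((rot n m j c) j : ℕ)) : ℂ) *
        u ((rot n m j).symm (rot n m j c))) -
      (e1 ((c j : ℕ)) : ℂ) * ((f1 m (((((rot n m j).symm c) j) : ℕ)) : ℂ) *
        u (rot n m j ((rot n m j).symm c)))
      = (((m:ℤ) - 2*((c j : ℕ) : ℤ) : ℤ) : ℂ) * u c := by
    intro j
    rw [Equiv.symm_apply_apply, Equiv.apply_symm_apply]
    have h1 : (f1 m ((c j : ℕ)) : ℂ) * (e1 (((rot n m j c) j : ℕ)) : ℂ)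
        = (f1 m ((c j : ℕ)) : ℂ) := by
      rcases eq_or_ne ((c j : ℕ)) m with hm | hm
      · have : f1 m ((c j:ℕ)) = 0 := by unfold f1; rw [hm]; simp
        rw [this]; simp
      · rw [rot_apply_self, val_finRotate _ hm]
        have : e1 ((c j : ℕ) + 1) = 1 := by unfold e1; rw [if_neg (by omega)]
        rw [this]; simp
    have h2 : (e1 ((c j : ℕ)) : ℂ) * (f1 m (((((rot n m j).symm c) j) : ℕ)) : ℂ)
        = (((c j : ℕ) * (m + 1 - (c j : ℕ)) : ℕ) : ℂ) := by
      rcases eq_or_ne ((c j : ℕ)) 0 with hm | hm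
      · rw [hm]; simp [e1]
      · rw [rot_symm_apply_self, val_finRotate_symm _ hm, ← Nat.cast_mul,
          e1_f1_pred (Fin.is_le (c j))]
    calc (f1 m ((c j : ℕ)) : ℂ) * ((e1 (((rot n m j c) j : ℕ)) : ℂ) * u c) -
          (e1 ((c j : ℕ)) : ℂ) * ((f1 m (((((rot n m j).symm c) j) : ℕ)) : ℂ) * u c)
        = ((f1 m ((c j : ℕ)) : ℂ) * (e1 (((rot n m j c) j : ℕ)) : ℂ) -
            (e1 ((c j : ℕ)) : ℂ) * (f1 m (((((rot n m j).symm c) j) : ℕ)) : ℂ)) * u c := by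
          ring
      _ = ((f1 m ((c j : ℕ)) : ℂ) - (((c j : ℕ) * (m + 1 - (c j : ℕ)) : ℕ) : ℂ)) * u c := by
          rw [h1, h2]
      _ = (((m:ℤ) - 2*((c j : ℕ) : ℤ) : ℤ) : ℂ) * u c := by
          congr 1
          have hle : (c j : ℕ) ≤ m := Fin.is_le (c j)
          unfold f1
          push_cast [Nat.cast_sub hle, Nat.cast_sub (by omega : (c j:ℕ) ≤ m + 1)]
          ring
  rw [Finset.sum_congr rfl (fun j _ => hdiag j)]
  rw [← Finset.sum_mul]
  congr 1
  rw [← Int.cast_sum]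
  congr 1
  rw [Finset.sum_sub_distrib]
  simp only [Finset.sum_const, Finset.card_univ, Fintype.card_fin, nsmul_eq_mul]
  rw [show (degB n m c : ℤ) = ∑ j, ((c j : ℕ) : ℤ) from by unfold degB; push_cast; rfl]
  rw [Finset.mul_sum]
  push_cast
  ring

lemma phi_FF (u v : Box n m → ℂ) : phi n m (FF n m u) v = phi n m u (EE n m v) := by
  have h1 : phi n m (FF n m u) v = ∑ j, ∑ b,
      ((ww n m b : ℂ) * (e1 ((b j:ℕ)) : ℂ)) *
        (starRingEnd ℂ) (u b) * v ((rot n m j).symm b) := by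
    unfold phi
    calc ∑ c, (ww n m c : ℂ) * (starRingEnd ℂ) (FF n m u c) * v c
        = ∑ c, ∑ j, (ww n m c : ℂ) * (f1 m ((c j:ℕ)) : ℂ) *
            (starRingEnd ℂ) (u (rot n m j c)) * v c := by
          refine Finset.sum_congr rfl fun c _ => ?_
          rw [FF_apply, map_sum, Finset.mul_sum, Finset.sum_mul]
          refine Finset.sum_congr rfl fun j _ => ?_
          rw [map_mul, map_natCast]
          ring
      _ = ∑ j, ∑ c, (ww n m c : ℂ) * (f1 m ((c j:ℕ)) : ℂ) *
            (starRingEnd ℂ) (u (rot n m j c)) * v c := Finset.sum_comm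
      _ = _ := by
          refine Finset.sum_congr rfl fun j _ => ?_
          rw [← Equiv.sum_comp ((rot n m j).symm)
            (fun c => (ww n m c : ℂ) * (f1 m ((c j:ℕ)) : ℂ) *
              (starRingEnd ℂ) (u (rot n m j c)) * v c)]
          refine Finset.sum_congr rfl fun b _ => ?_
          simp only [Equiv.apply_symm_apply]
          have hk : (ww n m ((rot n m j).symm b) : ℂ) *
              (f1 m ((((rot n m j).symm b) j : ℕ)) : ℂ)
              = (ww n m b : ℂ) * (e1 ((b j : ℕ)) : ℂ) := by
            rw [← Nat.cast_mul, ← Nat.cast_mul, key1]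
          rw [hk]
  have h2 : phi n m u (EE n m v) = ∑ j, ∑ b,
      ((ww n m b : ℂ) * (e1 ((b j:ℕ)) : ℂ)) *
        (starRingEnd ℂ) (u b) * v ((rot n m j).symm b) := by
    unfold phi
    calc ∑ b, (ww n m b : ℂ) * (starRingEnd ℂ) (u b) * EE n m v b
        = ∑ b, ∑ j, ((ww n m b : ℂ) * (e1 ((b j:ℕ)) : ℂ)) *
            (starRingEnd ℂ) (u b) * v ((rot n m j).symm b) := by
          refine Finset.sum_congr rfl fun b _ => ?_
          rw [EE_apply, Finset.mul_sum]
          refine Finset.sum_congr rfl fun j _ => ?_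
          ring
      _ = _ := Finset.sum_comm
  rw [h1, h2]

lemma phi_EE (u v : Box n m → ℂ) : phi n m (EE n m u) v = phi n m u (FF n m v) := by
  have h1 : phi n m (EE n m u) v = ∑ j, ∑ b,
      ((ww n m b : ℂ) * (f1 m ((b j:ℕ)) : ℂ)) *
        (starRingEnd ℂ) (u b) * v (rot n m j b) := by
    unfold phi
    calc ∑ c, (ww n m c : ℂ) * (starRingEnd ℂ) (EE n m u c) * v c
        = ∑ c, ∑ j, (ww n m c : ℂ) * (e1 ((c j:ℕ)) : ℂ) *
            (starRingEnd ℂ) (u ((rot n m j).symm c)) * v c := by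
          refine Finset.sum_congr rfl fun c _ => ?_
          rw [EE_apply, map_sum, Finset.mul_sum, Finset.sum_mul]
          refine Finset.sum_congr rfl fun j _ => ?_
          rw [map_mul, map_natCast]
          ring
      _ = ∑ j, ∑ c, (ww n m c : ℂ) * (e1 ((c j:ℕ)) : ℂ) *
            (starRingEnd ℂ) (u ((rot n m j).symm c)) * v c := Finset.sum_comm
      _ = _ := by
          refine Finset.sum_congr rfl fun j _ => ?_
          rw [← Equiv.sum_comp (rot n m j)
            (fun c => (ww n m c : ℂ) * (e1 ((c j:ℕ)) : ℂ) *
              (starRingEnd ℂ) (u ((rot n m j).symm c)) * v c)]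
          refine Finset.sum_congr rfl fun b _ => ?_
          simp only [Equiv.symm_apply_apply]
          have hk : (ww n m (rot n m j b) : ℂ) * (e1 (((rot n m j b) j : ℕ)) : ℂ)
              = (ww n m b : ℂ) * (f1 m ((b j : ℕ)) : ℂ) := by
            rw [← Nat.cast_mul, ← Nat.cast_mul, key2]
          rw [hk]
  have h2 : phi n m u (FF n m v) = ∑ j, ∑ b,
      ((ww n m b : ℂ) * (f1 m ((b j:ℕ)) : ℂ)) *
        (starRingEnd ℂ) (u b) * v (rot n m j b) := by
    unfold phi
    calc ∑ b, (ww n m b : ℂ) * (starRingEnd ℂ) (u b) * FF n m v b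
        = ∑ b, ∑ j, ((ww n m b : ℂ) * (f1 m ((b j:ℕ)) : ℂ)) *
            (starRingEnd ℂ) (u b) * v (rot n m j b) := by
          refine Finset.sum_congr rfl fun b _ => ?_
          rw [FF_apply, Finset.mul_sum]
          refine Finset.sum_congr rfl fun j _ => ?_
          ring
      _ = _ := Finset.sum_comm
  rw [h1, h2]

lemma phi_self (v : Box n m → ℂ) :
    phi n m v v = ((∑ b, (ww n m b : ℝ) * Complex.normSq (v b) : ℝ) : ℂ) := by
  unfold phi
  push_cast
  refine Finset.sum_congr rfl fun b _ => ?_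
  rw [mul_assoc, Complex.normSq_eq_conj_mul_self]

noncomputable def fermatSl2 (n m : ℕ) : Sl2Data (Box n m → ℂ) where
  V := VV n m
  D := (n+2)*m
  E := EE n m
  F := FF n m
  φ := phi n m
  hEV := by
    intro i v hv b hb
    rw [EE_apply]
    apply Finset.sum_eq_zero
    intro j _
    rcases eq_or_ne ((b j : ℕ)) 0 with h0 | h0
    · have : e1 ((b j : ℕ)) = 0 := if_pos h0
      rw [this]
      simp
    · have hdeg := degB_rot_symm b j h0
      have : v ((rot n m j).symm b) = 0 := by
        apply hv
        intro hcon
        apply hb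
        have : ((degB n m ((rot n m j).symm b) : ℤ)) + 1 = (degB n m b : ℤ) := by
          exact_mod_cast congrArg (Nat.cast : ℕ → ℤ) hdeg
        omega
      rw [this, mul_zero]
  hFV := by
    intro i v hv b hb
    rw [FF_apply]
    apply Finset.sum_eq_zero
    intro j _
    rcases eq_or_ne ((b j : ℕ)) m with h0 | h0
    · have : f1 m ((b j : ℕ)) = 0 := by unfold f1; rw [h0]; simp
      rw [this]
      simp
    · have hdeg := degB_rot b j h0
      have : v (rot n m j b) = 0 := by
        apply hv
        intro hcon
        apply hb
        have : (degB n m (rot n m j b) : ℤ) = (degB n m b : ℤ) + 1 := by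
          exact_mod_cast congrArg (Nat.cast : ℕ → ℤ) hdeg
        omega
      rw [this, mul_zero]
  hVneg := by
    intro i hi
    rw [Submodule.eq_bot_iff]
    intro u hu
    funext b
    have := hu b (by
      intro hcon
      have : (0:ℤ) ≤ (degB n m b : ℤ) := Int.natCast_nonneg _
      omega)
    exact this
  hVbig := by
    intro i hi
    rw [Submodule.eq_bot_iff]
    intro u hu
    funext b
    refine hu b ?_
    intro hcon
    have h1 : (degB n m b : ℤ) ≤ (((n+2)*m : ℕ) : ℤ) := by exact_mod_cast degB_le b
    omega
  hcomm := by
    intro i v hv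
    funext c
    have hc := comm_apply v c
    rw [Pi.add_apply, Pi.smul_apply, smul_eq_mul]
    rcases eq_or_ne (v c) 0 with h0 | h0
    · rw [h0, mul_zero] at hc ⊢
      rw [add_zero]
      linear_combination hc
    · have hdeg : (degB n m c : ℤ) = i := by
        by_contra hcon
        exact h0 (hv c hcon)
      have : ((((n:ℤ)+2)*m - 2*(degB n m c : ℤ) : ℤ) : ℂ)
          = (((((n+2)*m : ℕ) : ℤ) - 2*i : ℤ) : ℂ) := by
        rw [hdeg]
        push_cast
        ring
      rw [this] at hc
      linear_combination hc
  φadd := by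
    intro u v w
    unfold phi
    rw [← Finset.sum_add_distrib]
    refine Finset.sum_congr rfl fun b _ => ?_
    rw [Pi.add_apply]
    ring
  φsmul := by
    intro c u v
    unfold phi
    rw [Finset.mul_sum]
    refine Finset.sum_congr rfl fun b _ => ?_
    rw [Pi.smul_apply, smul_eq_mul]
    ring
  φzero := by
    intro v
    unfold phi
    apply Finset.sum_eq_zero
    intro b _
    rw [Pi.zero_apply, map_zero, mul_zero, zero_mul]
  hadjF := phi_FF
  hadjE := phi_EE
  him := by
    intro v
    rw [phi_self]
    exact Complex.ofReal_im _
  hre := by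
    intro v
    rw [phi_self, Complex.ofReal_re]
    apply Finset.sum_nonneg
    intro b _
    have : (0:ℝ) ≤ (ww n m b : ℝ) := Nat.cast_nonneg _
    exact mul_nonneg this (Complex.normSq_nonneg _)
  hdef := by
    intro v hv
    rw [phi_self] at hv
    have hsum : (∑ b, (ww n m b : ℝ) * Complex.normSq (v b)) = 0 := by
      exact_mod_cast hv
    have hterm := (Finset.sum_eq_zero_iff_of_nonneg (fun b _ =>
      mul_nonneg (Nat.cast_nonneg _) (Complex.normSq_nonneg _))).mp hsum
    funext b
    have hb := hterm b (Finset.mem_univ b)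
    have hwpos : (0:ℝ) < (ww n m b : ℝ) := by exact_mod_cast ww_pos n m b
    have : Complex.normSq (v b) = 0 := by
      rcases mul_eq_zero.mp hb with h | h
      · exact absurd h (ne_of_gt hwpos)
      · exact h
    exact Complex.normSq_eq_zero.mp this

section Bridge

variable (n m : ℕ)

abbrev RR := MvPolynomial (Fin (n+2)) ℂ

/-- The monomial complete intersection ideal `(x₀^{m+1}, …, x_{n+1}^{m+1})`. -/
noncomputable def JJ : Ideal (RR n) :=
  Ideal.span (Set.range fun j : Fin (n+2) => (X j : RR n) ^ (m+1))

/-- Exponent finsupp attached to a box point. -/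
noncomputable def expB (b : Box n m) : Fin (n+2) →₀ ℕ :=
  Finsupp.equivFunOnFinite.symm (fun j => ((b j : ℕ)))

variable {n m}

lemma expB_apply (b : Box n m) (j : Fin (n+2)) : expB n m b j = (b j : ℕ) := rfl

lemma expB_injective : Function.Injective (expB n m) := by
  intro a b hab
  funext j
  have := congrArg (fun e => (e : (Fin (n+2) →₀ ℕ)) j) hab
  simp only [expB_apply] at this
  exact Fin.ext this

lemma expB_degree (b : Box n m) : (expB n m b).degree = degB n m b := by
  unfold Finsupp.degree degB
  apply Finset.sum_subset (Finset.subset_univ _)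
  intro j _ hj
  simpa using Finsupp.notMem_support_iff.mp hj

lemma monomial_mem_JJ {e : Fin (n+2) →₀ ℕ} (j : Fin (n+2)) (hj : m + 1 ≤ e j) (c : ℂ) :
    monomial e c ∈ JJ n m := by
  have hle : Finsupp.single j (m+1) ≤ e := by
    rw [Finsupp.single_le_iff]
    exact hj
  have hrep : monomial e c
      = monomial (e - Finsupp.single j (m+1)) c * (X j : RR n) ^ (m+1) := by
    rw [X_pow_eq_monomial, monomial_mul, mul_one, tsub_add_cancel_of_le hle]
  rw [hrep]
  apply Ideal.mul_mem_left
  apply Ideal.subset_span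
  exact ⟨j, rfl⟩

lemma coeff_eq_zero_of_mem_JJ {p : RR n} (hp : p ∈ JJ n m) {e : Fin (n+2) →₀ ℕ}
    (he : ∀ j, e j ≤ m) : coeff e p = 0 := by
  rw [JJ, Ideal.mem_span_range_iff_exists_fun] at hp
  obtain ⟨c, rfl⟩ := hp
  rw [coeff_sum]
  apply Finset.sum_eq_zero
  intro j _
  rw [X_pow_eq_monomial, coeff_mul_monomial']
  rw [if_neg]
  intro hle
  have := hle j
  rw [Finsupp.single_apply, if_pos rfl] at this
  exact absurd this (by have := he j; omega)

variable (n m)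

/-- The comparison map from box functions to the quotient ring. -/
noncomputable def TT : (Box n m → ℂ) →ₗ[ℂ] (RR n ⧸ JJ n m) where
  toFun u := ∑ b, u b • Ideal.Quotient.mkₐ ℂ (JJ n m) (monomial (expB n m b) 1)
  map_add' u v := by
    rw [← Finset.sum_add_distrib]
    refine Finset.sum_congr rfl fun b _ => ?_
    rw [Pi.add_apply, add_smul]
  map_smul' c u := by
    rw [RingHom.id_apply, Finset.smul_sum]
    refine Finset.sum_congr rfl fun b _ => ?_
    rw [Pi.smul_apply, smul_eq_mul, mul_smul]

variable {n m}

lemma TT_apply (u : Box n m → ℂ) :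
    TT n m u = ∑ b, u b • Ideal.Quotient.mkₐ ℂ (JJ n m) (monomial (expB n m b) 1) := rfl

lemma TT_eq_mk (u : Box n m → ℂ) :
    TT n m u = Ideal.Quotient.mkₐ ℂ (JJ n m) (∑ b, u b • monomial (expB n m b) 1) := by
  rw [TT_apply, map_sum]
  refine Finset.sum_congr rfl fun b _ => ?_
  rw [map_smul]

lemma TT_injective : Function.Injective (TT n m) := by
  rw [injective_iff_map_eq_zero]
  intro u hu
  rw [TT_eq_mk] at hu
  have hmem : (∑ b, u b • monomial (expB n m b) (1:ℂ)) ∈ JJ n m := by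
    rw [Ideal.Quotient.mkₐ_eq_mk] at hu
    exact (Ideal.Quotient.eq_zero_iff_mem).mp hu
  funext b
  have hco := coeff_eq_zero_of_mem_JJ hmem (e := expB n m b)
    (fun j => by rw [expB_apply]; exact Fin.is_le _)
  rw [coeff_sum] at hco
  show u b = 0
  rw [← hco]
  rw [Finset.sum_eq_single b]
  · rw [coeff_smul, coeff_monomial, if_pos rfl, smul_eq_mul, mul_one]
  · intro c _ hc
    rw [coeff_smul, coeff_monomial, if_neg, smul_eq_mul, mul_zero]
    exact fun hh => hc (expB_injective hh)
  · intro hb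
    exact absurd (Finset.mem_univ b) hb

lemma TT_mem_gradedPiece (i : ℕ) (u : Box n m → ℂ) (hu : u ∈ VV n m (i:ℤ)) :
    TT n m u ∈ gradedPiece (JJ n m) i := by
  rw [TT_eq_mk]
  refine ⟨∑ b, u b • monomial (expB n m b) 1, ?_, rfl⟩
  apply Submodule.sum_mem
  intro b _
  rcases eq_or_ne (u b) 0 with h0 | h0
  · rw [h0, zero_smul]
    exact Submodule.zero_mem _
  · apply Submodule.smul_mem
    rw [mem_homogeneousSubmodule]
    apply isHomogeneous_monomial
    rw [expB_degree]
    have : (degB n m b : ℤ) = (i:ℤ) := by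
      by_contra hcon
      exact h0 (hu b hcon)
    exact_mod_cast this

lemma gradedPiece_to_TT (i : ℕ) (y : RR n ⧸ JJ n m) (hy : y ∈ gradedPiece (JJ n m) i) :
    ∃ u ∈ VV n m (i:ℤ), TT n m u = y := by
  obtain ⟨p, hp, rfl⟩ := hy
  have hp' : p.IsHomogeneous i := hp
  clear hp
  refine ⟨fun b => coeff (expB n m b) p, ?_, ?_⟩
  · intro b hb
    by_contra h0
    apply hb
    have := hp' h0
    rw [show (Finsupp.weight 1 : (Fin (n+2) →₀ ℕ) →+ ℕ) = Finsupp.degree from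
      Finsupp.degree_eq_weight_one.symm, expB_degree] at this
    exact_mod_cast congrArg (Nat.cast : ℕ → ℤ) this
  · rw [TT_eq_mk]
    show Ideal.Quotient.mkₐ ℂ (JJ n m) _ = Ideal.Quotient.mkₐ ℂ (JJ n m) p
    rw [Ideal.Quotient.mkₐ_eq_mk, Ideal.Quotient.mk_eq_mk_iff_sub_mem]
    -- identify the box part of p
    have hq : (∑ b, coeff (expB n m b) p • monomial (expB n m b) (1:ℂ))
        = ∑ e ∈ p.support.filter (fun e => ∀ j, e j ≤ m), monomial e (coeff e p) := by
      have h1 : ∀ b : Box n m, coeff (expB n m b) p • monomial (expB n m b) (1:ℂ)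
          = monomial (expB n m b) (coeff (expB n m b) p) := by
        intro b
        rw [smul_monomial, smul_eq_mul, mul_one]
      rw [Finset.sum_congr rfl fun b _ => h1 b]
      have himg : ∑ e ∈ Finset.univ.image (expB n m), monomial e (coeff e p)
          = ∑ b, monomial (expB n m b) (coeff (expB n m b) p) :=
        Finset.sum_image (fun a _ c _ hac => expB_injective hac)
      rw [← himg]
      symm
      apply Finset.sum_subset
      · intro e he
        rw [Finset.mem_filter] at he
        rw [Finset.mem_image]
        refine ⟨fun j => (⟨e j, by have := he.2 j; omega⟩ : Fin (m+1)), Finset.mem_univ _, ?_⟩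
        ext j
        rw [expB_apply]
      · intro e he hne
        rw [Finset.mem_image] at he
        obtain ⟨b, _, rfl⟩ := he
        have hbox : ∀ j, expB n m b j ≤ m := fun j => by
          rw [expB_apply]; exact Fin.is_le _
        have : expB n m b ∉ p.support := by
          intro hsup
          exact hne (Finset.mem_filter.mpr ⟨hsup, hbox⟩)
        rw [MvPolynomial.notMem_support_iff.mp this, monomial_zero]
    rw [hq]
    have hrep := (as_sum p)
    have hsplit : ∑ e ∈ p.support, monomial e (coeff e p)
        = (∑ e ∈ p.support.filter (fun e => ∀ j, e j ≤ m), monomial e (coeff e p))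
          + ∑ e ∈ p.support.filter (fun e => ¬ ∀ j, e j ≤ m), monomial e (coeff e p) :=
      (Finset.sum_filter_add_sum_filter_not _ _ _).symm
    have : (∑ e ∈ p.support.filter (fun e => ∀ j, e j ≤ m), monomial e (coeff e p)) - p
        = - ∑ e ∈ p.support.filter (fun e => ¬ ∀ j, e j ≤ m), monomial e (coeff e p) := by
      have hps := hrep.trans hsplit
      linear_combination -hps
    rw [this]
    apply Submodule.neg_mem
    apply Submodule.sum_mem
    intro e he
    rw [Finset.mem_filter] at he
    push_neg at he
    obtain ⟨j, hj⟩ := he.2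
    exact monomial_mem_JJ j (by omega) _

lemma TT_delta (b : Box n m) :
    TT n m (Pi.single b 1) = Ideal.Quotient.mkₐ ℂ (JJ n m) (monomial (expB n m b) 1) := by
  rw [TT_apply, Finset.sum_eq_single b]
  · rw [Pi.single_eq_same, one_smul]
  · intro c _ hc
    rw [Pi.single_eq_of_ne hc, zero_smul]
  · intro hb
    exact absurd (Finset.mem_univ b) hb

lemma expB_rot (b : Box n m) (j : Fin (n+2)) (h : (b j : ℕ) ≠ m) :
    expB n m (rot n m j b) = Finsupp.single j 1 + expB n m b := by
  ext l
  rw [Finsupp.add_apply, expB_apply, expB_apply, Finsupp.single_apply]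
  rcases eq_or_ne l j with rfl | hl
  · rw [if_pos rfl, rot_apply_self, val_finRotate _ h]
    ring
  · rw [if_neg (Ne.symm hl), rot_apply_ne _ _ _ hl, zero_add]

lemma TT_EE_single (b : Box n m) :
    TT n m (EE n m (Pi.single b 1)) =
      Ideal.Quotient.mkₐ ℂ (JJ n m) (∑ j, X j) * TT n m (Pi.single b 1) := by
  have hlhs : TT n m (EE n m (Pi.single b 1))
      = ∑ j, (e1 (((rot n m j b) j : ℕ)) : ℂ) •
          Ideal.Quotient.mkₐ ℂ (JJ n m) (monomial (expB n m (rot n m j b)) 1) := by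
    rw [TT_apply]
    have h1 : ∀ c : Box n m, EE n m (Pi.single b 1) c •
          Ideal.Quotient.mkₐ ℂ (JJ n m) (monomial (expB n m c) 1)
        = ∑ j, ((e1 ((c j : ℕ)) : ℂ) * (Pi.single b 1 : Box n m → ℂ) ((rot n m j).symm c)) •
            Ideal.Quotient.mkₐ ℂ (JJ n m) (monomial (expB n m c) 1) := by
      intro c
      rw [EE_apply, Finset.sum_smul]
    rw [Finset.sum_congr rfl fun c _ => h1 c, Finset.sum_comm]
    refine Finset.sum_congr rfl fun j _ => ?_
    rw [← Equiv.sum_comp (rot n m j) (fun c => ((e1 ((c j : ℕ)) : ℂ) *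
        (Pi.single b 1 : Box n m → ℂ) ((rot n m j).symm c)) •
          Ideal.Quotient.mkₐ ℂ (JJ n m) (monomial (expB n m c) 1))]
    rw [Finset.sum_eq_single b]
    · rw [Equiv.symm_apply_apply, Pi.single_eq_same, mul_one]
    · intro c _ hc
      rw [Equiv.symm_apply_apply, Pi.single_eq_of_ne hc, mul_zero, zero_smul]
    · intro hb
      exact absurd (Finset.mem_univ b) hb
  rw [hlhs, TT_delta, ← map_mul, Finset.sum_mul, map_sum]
  refine Finset.sum_congr rfl fun j _ => ?_
  have hXmul : (X j : RR n) * monomial (expB n m b) 1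
      = monomial (Finsupp.single j 1 + expB n m b) (1:ℂ) := by
    rw [X, monomial_mul, one_mul]
  rw [hXmul]
  rcases eq_or_ne ((b j : ℕ)) m with hm | hm
  · have h0 : (((rot n m j b) j : ℕ)) = 0 := by
      rw [rot_apply_self]
      exact val_finRotate_top _ hm
    rw [h0]
    have : e1 0 = 0 := if_pos rfl
    rw [this, Nat.cast_zero, zero_smul]
    symm
    rw [Ideal.Quotient.mkₐ_eq_mk, Ideal.Quotient.eq_zero_iff_mem]
    apply monomial_mem_JJ j
    rw [Finsupp.add_apply, Finsupp.single_apply, if_pos rfl, expB_apply, hm]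
    omega
  · have h1 : (((rot n m j b) j : ℕ)) = (b j : ℕ) + 1 := by
      rw [rot_apply_self]
      exact val_finRotate _ hm
    rw [h1]
    have : e1 ((b j : ℕ) + 1) = 1 := by unfold e1; rw [if_neg (by omega)]
    rw [this, Nat.cast_one, one_smul, expB_rot _ _ hm]

lemma TT_EE (u : Box n m → ℂ) :
    TT n m (EE n m u) =
      Ideal.Quotient.mkₐ ℂ (JJ n m) (∑ j, X j) * TT n m u := by
  have hmaps : (TT n m) ∘ₗ (EE n m) =
      (LinearMap.mulLeft ℂ (Ideal.Quotient.mkₐ ℂ (JJ n m) (∑ j, X j))) ∘ₗ (TT n m) := by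
    apply (Pi.basisFun ℂ (Box n m)).ext
    intro b
    rw [LinearMap.comp_apply, LinearMap.comp_apply]
    have hb : Pi.basisFun ℂ (Box n m) b = Pi.single b 1 := by
      simp [Pi.basisFun_apply]
    rw [hb]
    rw [TT_EE_single]
    rfl
  exact congrFun (congrArg (fun f => f.toFun) hmaps) u

lemma TT_EE_pow (k : ℕ) (u : Box n m → ℂ) :
    TT n m ((EE n m ^ k) u) =
      Ideal.Quotient.mkₐ ℂ (JJ n m) ((∑ j, X j)^k) * TT n m u := by
  induction k with
  | zero => simp
  | succ k ih =>
    rw [Sl2Data.pow_succ_apply (EE n m) k u, TT_EE, ih, ← mul_assoc, ← map_mul, ← pow_succ']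

lemma pderiv_fermat (n m : ℕ) (j : Fin (n+2)) :
    pderiv j (∑ l : Fin (n+2), (X l : RR n) ^ (m+2))
      = C (((m:ℕ)+2 : ℂ)) * (X j) ^ (m+1) := by
  rw [map_sum]
  rw [Finset.sum_eq_single j]
  · rw [X_pow_eq_monomial, pderiv_monomial]
    rw [Finsupp.single_apply, if_pos rfl]
    rw [← Finsupp.single_tsub]
    rw [X_pow_eq_monomial, C_mul_monomial]
    norm_num
  · intro l _ hl
    rw [X_pow_eq_monomial, pderiv_monomial]
    rw [Finsupp.single_apply, if_neg (by exact_mod_cast hl)]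
    rw [Nat.cast_zero, mul_zero, monomial_zero]
  · intro hj
    exact absurd (Finset.mem_univ j) hj

lemma J_eq (n m : ℕ) :
    Ideal.span (Set.range fun j : Fin (n+2) =>
      pderiv j (∑ l : Fin (n+2), (X l : RR n) ^ (m+2))) = JJ n m := by
  have hC : (((m:ℕ)+2 : ℂ)) ≠ 0 := by
    intro hcon
    have : ((m:ℕ)+2 : ℂ) = ((m+2 : ℕ) : ℂ) := by push_cast; ring
    rw [this] at hcon
    exact_mod_cast hcon
  apply le_antisymm
  · rw [Ideal.span_le]
    rintro x ⟨j, rfl⟩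
    show pderiv j (∑ l : Fin (n+2), (X l : RR n) ^ (m+2)) ∈ (JJ n m : Set (RR n))
    rw [pderiv_fermat]
    exact Ideal.mul_mem_left _ _ (Ideal.subset_span ⟨j, rfl⟩)
  · rw [JJ, Ideal.span_le]
    rintro x ⟨j, rfl⟩
    show (X j : RR n) ^ (m+1) ∈
      (Ideal.span (Set.range fun j : Fin (n+2) =>
        pderiv j (∑ l : Fin (n+2), (X l : RR n) ^ (m+2))) : Set (RR n))
    have : (X j : RR n) ^ (m+1)
        = C (((m:ℕ)+2 : ℂ))⁻¹ * (C (((m:ℕ)+2 : ℂ)) * (X j) ^ (m+1)) := by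
      rw [← mul_assoc, ← C_mul, inv_mul_cancel₀ hC, C_1, one_mul]
    rw [this, ← pderiv_fermat n m j]
    exact Ideal.mul_mem_left _ _ (Ideal.subset_span ⟨j, rfl⟩)

end Bridge

end FermatMRP

theorem mrp_milnor_algebra_fermat
    (n d : ℕ) (hd : 2 ≤ d)
    (h : MvPolynomial (Fin (n + 2)) ℂ) (hh : h = ∑ j, X j ^ d)
    (J : Ideal (MvPolynomial (Fin (n + 2)) ℂ))
    (hJ : J = Ideal.span (Set.range fun i : Fin (n + 2) => pderiv i h))
    (k : ℕ) :
    ∃ f : MvPolynomial (Fin (n + 2)) ℂ, f.IsHomogeneous k ∧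
      ∀ i : ℕ,
        Set.InjOn (fun x => Ideal.Quotient.mk J f * x) (gradedPiece J i) ∨
        Set.SurjOn (fun x => Ideal.Quotient.mk J f * x) (gradedPiece J i)
          (gradedPiece J (i + k)) := by
  obtain ⟨m, rfl⟩ : ∃ m, d = m + 2 := ⟨d - 2, by omega⟩
  subst hh
  have hJeq : J = FermatMRP.JJ n m := by rw [hJ]; exact FermatMRP.J_eq n m
  subst hJeq
  clear hJ hd
  set S : Sl2Data (FermatMRP.Box n m → ℂ) := FermatMRP.fermatSl2 n m with hS
  have hmul : ∀ (w : FermatMRP.Box n m → ℂ),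
      Ideal.Quotient.mk (FermatMRP.JJ n m) ((∑ j, X j)^k) * FermatMRP.TT n m w
        = FermatMRP.TT n m ((FermatMRP.EE n m ^ k) w) := by
    intro w
    rw [FermatMRP.TT_EE_pow, Ideal.Quotient.mkₐ_eq_mk]
  refine ⟨(∑ j, X j)^k, ?_, ?_⟩
  · have h1 : (∑ j : Fin (n+2), (X j : MvPolynomial (Fin (n+2)) ℂ)).IsHomogeneous 1 :=
      MvPolynomial.IsHomogeneous.sum _ _ _ (fun j _ => isHomogeneous_X ℂ j)
    simpa using h1.pow k
  intro i
  rcases le_or_gt (2*i + k) ((n+2)*m) with hcase | hcase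
  · left
    intro x hx y hy hxy
    obtain ⟨u, hu, hTu⟩ := FermatMRP.gradedPiece_to_TT i x hx
    obtain ⟨v, hv, hTv⟩ := FermatMRP.gradedPiece_to_TT i y hy
    simp only at hxy
    rw [← hTu, ← hTv, hmul, hmul] at hxy
    have heq := FermatMRP.TT_injective hxy
    have hzero : (FermatMRP.EE n m ^ k) (u - v) = 0 := by
      rw [map_sub, heq, sub_self]
    have huv : u - v = 0 := by
      refine S.inj' i k ?_ (u - v) (Submodule.sub_mem _ hu hv) hzero
      show 2*(i:ℤ) + k ≤ (((n+2)*m : ℕ) : ℤ)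
      exact_mod_cast hcase
    have : u = v := by rwa [sub_eq_zero] at huv
    rw [← hTu, ← hTv, this]
  · right
    intro y hy
    obtain ⟨u, hu, hTu⟩ := FermatMRP.gradedPiece_to_TT (i+k) y hy
    have hu' : u ∈ S.V ((i:ℤ) + k) := by
      have hcast : (((i+k : ℕ)) : ℤ) = (i:ℤ) + k := by push_cast; ring
      rw [show ((i:ℤ) + k) = (((i+k : ℕ)) : ℤ) from hcast.symm]
      exact hu
    obtain ⟨v, hv, hEv⟩ := S.surj i k (by
      show (((n+2)*m : ℕ) : ℤ) ≤ 2*(i:ℤ) + k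
      exact_mod_cast hcase.le) u hu'
    refine ⟨FermatMRP.TT n m v, ?_, ?_⟩
    · exact FermatMRP.TT_mem_gradedPiece i v hv
    · show Ideal.Quotient.mk (FermatMRP.JJ n m) ((∑ j, X j)^k) * FermatMRP.TT n m v = y
      rw [hmul]
      have : (FermatMRP.EE n m ^ k) v = u := hEv
      rw [this, hTu]
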